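/- (Robust Bellman equations) For every Markov policy π, every h ∈ {1,…,H}, and every (s,a) ∈ S × A: Q_h^π(s,a) = inf_{(P_h,r_h) ∈ U_h} [ r_h(s,a) + ∑_{s'} P_h(s'|s,a) V_{h+1}^π(s') ] and V_h^π(s) = ∑_{a∈A} π_h(a|s) Q_h^π(s,a), where V_{H+1}^π ≡ 0. -/

import Mathlib

open scoped BigOperators
open MeasureTheory

noncomputable section

/-- The probability simplex `Δ^{K-1} ⊆ ℝ^K`. -/
def probSimplex (K : ℕ) : Set (Fin K → ℝ) :=
  {α | (∀ k, 0 ≤ α k) ∧ ∑ k, α k = 1}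

/-- Data of a group-linear DRMDP: shared simplex features `φ`, and for every step `h`,
coordinate `i` and site `k`, a reward factor `θ h i k ∈ [0,1]` and a probability
mass function `μ h i k` on the (finite) state space `S`. -/
structure DRMDP (S A : Type) [Fintype S] (H K d : ℕ) where
  φ : S → A → Fin d → ℝ
  φ_nonneg : ∀ s a i, 0 ≤ φ s a i
  φ_sum : ∀ s a, ∑ i, φ s a i = 1
  θ : Fin H → Fin d → Fin K → ℝ
  θ_nonneg : ∀ h i k, 0 ≤ θ h i k
  θ_le_one : ∀ h i k, θ h i k ≤ 1
  μ : Fin H → Fin d → Fin K → S → ℝ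
  μ_nonneg : ∀ h i k s', 0 ≤ μ h i k s'
  μ_sum : ∀ h i k, ∑ s', μ h i k s' = 1

namespace DRMDP

variable {S A : Type} [Fintype S] [Fintype A] {H K d : ℕ}

/-- Site-`k` transition kernel `P_h^k(s'|s,a) = ∑_i φ_i(s,a) μ_{h,i}^k(s')`. -/
def Pk (M : DRMDP S A H K d) (h : Fin H) (k : Fin K) (s : S) (a : A) (s' : S) : ℝ :=
  ∑ i, M.φ s a i * M.μ h i k s'

/-- Site-`k` expected reward `r_h^k(s,a) = ∑_i φ_i(s,a) θ_{h,i}^k`. -/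
def rk (M : DRMDP S A H K d) (h : Fin H) (k : Fin K) (s : S) (a : A) : ℝ :=
  ∑ i, M.φ s a i * M.θ h i k

/-- Membership `(P,r) ∈ U_h` in the d-rectangular feature-wise cross-site
convex-hull uncertainty set. -/
def inU (M : DRMDP S A H K d) (h : Fin H) (P : S → A → S → ℝ) (r : S → A → ℝ) : Prop :=
  ∃ α : Fin d → Fin K → ℝ,
    (∀ i, α i ∈ probSimplex K) ∧
    (∀ s a, r s a = ∑ i, M.φ s a i * ∑ k, α i k * M.θ h i k) ∧
    (∀ s a s', P s a s' = ∑ i, M.φ s a i * ∑ k, α i k * M.μ h i k s')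

/-- Membership `P ∈ 𝒫_h` (the transition kernels appearing in `U_h`). -/
def inP (M : DRMDP S A H K d) (h : Fin H) (P : S → A → S → ℝ) : Prop :=
  ∃ r, M.inU h P r

/-- The robust Bellman operator
`(𝔹_h V)(s,a) = inf_{(P,r) ∈ U_h} [ r(s,a) + ∑_{s'} P(s'|s,a) V(s') ]`. -/
def bellman (M : DRMDP S A H K d) (h : Fin H) (V : S → ℝ) (s : S) (a : A) : ℝ :=
  sInf {x | ∃ P r, M.inU h P r ∧ x = r s a + ∑ s', P s a s' * V s'}

end DRMDP

/-- A Markov (possibly randomized) policy: `π h (·|s)` is a pmf on the actions. -/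
def IsPolicy {S A : Type} [Fintype A] (H : ℕ) (π : Fin H → S → A → ℝ) : Prop :=
  ∀ h s, (∀ a, 0 ≤ π h s a) ∧ ∑ a, π h s a = 1

/-- `cumW H π P r t s` is the expected cumulative reward `W_t(s)` from (0-indexed)
step `t` on, under policy `π` and model sequence `(P,r)`; `W_t ≡ 0` for `t ≥ H`. -/
def cumW {S A : Type} [Fintype S] [Fintype A] (H : ℕ)
    (π : Fin H → S → A → ℝ) (P : Fin H → S → A → S → ℝ) (r : Fin H → S → A → ℝ) :
    ℕ → S → ℝ
  | t =>
    if ht : t < H then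
      fun s => ∑ a, π ⟨t, ht⟩ s a *
        (r ⟨t, ht⟩ s a + ∑ s', P ⟨t, ht⟩ s a s' * cumW H π P r (t + 1) s')
    else fun _ => 0
  termination_by t => H - t
  decreasing_by omega

namespace DRMDP

variable {S A : Type} [Fintype S] [Fintype A] {H K d : ℕ}

/-- Robust value function `V_t^π(s)`: worst case of `W_t(s)` over model sequences in `∏ U_h`. -/
def robustV (M : DRMDP S A H K d) (π : Fin H → S → A → ℝ) (t : ℕ) (s : S) : ℝ :=
  sInf {x | ∃ P r, (∀ h : Fin H, M.inU h (P h) (r h)) ∧ x = cumW H π P r t s}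

/-- Robust Q-function `Q_h^π(s,a)`. -/
def robustQ (M : DRMDP S A H K d) (π : Fin H → S → A → ℝ) (h : Fin H) (s : S) (a : A) : ℝ :=
  sInf {x | ∃ P r, (∀ t : Fin H, M.inU t (P t) (r t)) ∧
    x = r h s a + ∑ s', P h s a s' * cumW H π P r ((h : ℕ) + 1) s'}

/-- `πs` is a robust optimal Markov policy. -/
def IsOptimalRobust (M : DRMDP S A H K d) (πs : Fin H → S → A → ℝ) : Prop :=
  IsPolicy H πs ∧ ∀ π, IsPolicy H π → ∀ (h : Fin H) (s : S),
    M.robustV π (h : ℕ) s ≤ M.robustV πs (h : ℕ) s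

end DRMDP

/-- Step-`t` state distribution of the Markov chain started at `s₁`, following
policy `π` and transition kernels `P`. -/
def visit {S A : Type} [Fintype S] [Fintype A] [DecidableEq S] (H : ℕ)
    (π : Fin H → S → A → ℝ) (P : Fin H → S → A → S → ℝ) (s₁ : S) : ℕ → S → ℝ
  | 0 => fun s => if s = s₁ then 1 else 0
  | t + 1 => fun s' =>
      if ht : t < H then
        ∑ s, ∑ a, visit H π P s₁ t s * π ⟨t, ht⟩ s a * P ⟨t, ht⟩ s a s'
      else 0

/-- `E^{π,P}[ f(s_h, a_h) | s_1 = s₁ ]` (0-indexed step `h`). -/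
def expAt {S A : Type} [Fintype S] [Fintype A] [DecidableEq S] (H : ℕ)
    (π : Fin H → S → A → ℝ) (P : Fin H → S → A → S → ℝ) (s₁ : S)
    (h : Fin H) (f : S → A → ℝ) : ℝ :=
  ∑ s, ∑ a, visit H π P s₁ (h : ℕ) s * π h s a * f s a



namespace DRMDP

variable {S A : Type} [Fintype S] [Fintype A] {H K d : ℕ}

/-- coordinate-site value `g = θ + μ·V`. -/
def gfun (M : DRMDP S A H K d) (t : Fin H) (V : S → ℝ) (i : Fin d) (k : Fin K) : ℝ :=
  M.θ t i k + ∑ s', M.μ t i k s' * V s'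

def kstar (M : DRMDP S A H K d) (hK : 1 ≤ K) (t : Fin H) (V : S → ℝ) (i : Fin d) : Fin K :=
  (Finset.exists_min_image Finset.univ (M.gfun t V i) ⟨⟨0, hK⟩, Finset.mem_univ _⟩).choose

lemma kstar_min (M : DRMDP S A H K d) (hK : 1 ≤ K) (t : Fin H) (V : S → ℝ) (i : Fin d)
    (k : Fin K) : M.gfun t V i (M.kstar hK t V i) ≤ M.gfun t V i k :=
  (Finset.exists_min_image Finset.univ (M.gfun t V i)
    ⟨⟨0, hK⟩, Finset.mem_univ _⟩).choose_spec.2 k (Finset.mem_univ k)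

/-- one-step backup with greedy site choice. -/
def Qt (M : DRMDP S A H K d) (hK : 1 ≤ K) (t : Fin H) (V : S → ℝ) (s : S) (a : A) : ℝ :=
  ∑ i, M.φ s a i * M.gfun t V i (M.kstar hK t V i)

/-- backward-recursive value function. -/
def Vt (M : DRMDP S A H K d) (hK : 1 ≤ K) (π : Fin H → S → A → ℝ) : ℕ → S → ℝ
  | t =>
    if ht : t < H then
      fun s => ∑ a, π ⟨t, ht⟩ s a * M.Qt hK ⟨t, ht⟩ (M.Vt hK π (t + 1)) s a
    else fun _ => 0
  termination_by t => H - t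
  decreasing_by omega

/-- greedy transition kernel at step h. -/
def Pstar (M : DRMDP S A H K d) (hK : 1 ≤ K) (π : Fin H → S → A → ℝ) (h : Fin H)
    (s : S) (a : A) (s' : S) : ℝ :=
  ∑ i, M.φ s a i *
    ∑ k, (if k = M.kstar hK h (M.Vt hK π ((h : ℕ) + 1)) i then (1:ℝ) else 0) * M.μ h i k s'

def rstar (M : DRMDP S A H K d) (hK : 1 ≤ K) (π : Fin H → S → A → ℝ) (h : Fin H)
    (s : S) (a : A) : ℝ :=
  ∑ i, M.φ s a i *
    ∑ k, (if k = M.kstar hK h (M.Vt hK π ((h : ℕ) + 1)) i then (1:ℝ) else 0) * M.θ h i k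

lemma inU_star (M : DRMDP S A H K d) (hK : 1 ≤ K) (π : Fin H → S → A → ℝ) (h : Fin H) :
    M.inU h (M.Pstar hK π h) (M.rstar hK π h) := by
  refine ⟨fun i k => if k = M.kstar hK h (M.Vt hK π ((h : ℕ) + 1)) i then (1:ℝ) else 0,
    fun i => ⟨fun k => by positivity, by simp⟩, fun s a => rfl, fun s a s' => rfl⟩

lemma inner_ge {K : ℕ} {α g : Fin K → ℝ} (hα : α ∈ probSimplex K) (k0 : Fin K)
    (hmin : ∀ k, g k0 ≤ g k) : g k0 ≤ ∑ k, α k * g k := by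
  calc g k0 = ∑ k, α k * g k0 := by rw [← Finset.sum_mul, hα.2, one_mul]
  _ ≤ ∑ k, α k * g k :=
    Finset.sum_le_sum fun k _ => mul_le_mul_of_nonneg_left (hmin k) (hα.1 k)

lemma expand (M : DRMDP S A H K d) (t : Fin H) (V : S → ℝ) (α : Fin d → Fin K → ℝ)
    (s : S) (a : A) :
    (∑ i, M.φ s a i * ∑ k, α i k * M.θ t i k) +
      ∑ s', (∑ i, M.φ s a i * ∑ k, α i k * M.μ t i k s') * V s' =
    ∑ i, M.φ s a i * ∑ k, α i k * M.gfun t V i k := by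
  simp only [gfun, mul_add, Finset.mul_sum, Finset.sum_mul, Finset.sum_add_distrib, mul_assoc]
  congr 1
  rw [Finset.sum_comm]
  exact Finset.sum_congr rfl fun i _ => Finset.sum_comm

lemma Qt_le (M : DRMDP S A H K d) (hK : 1 ≤ K) (t : Fin H) {α : Fin d → Fin K → ℝ}
    (hαs : ∀ i, α i ∈ probSimplex K) {V W : S → ℝ} (hVW : ∀ s', V s' ≤ W s') (s : S) (a : A) :
    M.Qt hK t V s a ≤
      (∑ i, M.φ s a i * ∑ k, α i k * M.θ t i k) +
        ∑ s', (∑ i, M.φ s a i * ∑ k, α i k * M.μ t i k s') * W s' := by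
  have h1 : M.Qt hK t V s a ≤ ∑ i, M.φ s a i * ∑ k, α i k * M.gfun t V i k :=
    Finset.sum_le_sum fun i _ => mul_le_mul_of_nonneg_left
      (inner_ge (hαs i) _ fun k => M.kstar_min hK t V i k) (M.φ_nonneg s a i)
  refine h1.trans ?_
  rw [← M.expand t V α s a]
  refine add_le_add_right (Finset.sum_le_sum fun s' _ =>
    mul_le_mul_of_nonneg_left (hVW s') ?_) _
  exact Finset.sum_nonneg fun i _ => mul_nonneg (M.φ_nonneg s a i)
    (Finset.sum_nonneg fun k _ => mul_nonneg ((hαs i).1 k) (M.μ_nonneg t i k s'))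

lemma Qt_star (M : DRMDP S A H K d) (hK : 1 ≤ K) (π : Fin H → S → A → ℝ) (h : Fin H)
    (s : S) (a : A) :
    M.rstar hK π h s a + ∑ s', M.Pstar hK π h s a s' * M.Vt hK π ((h : ℕ) + 1) s' =
      M.Qt hK h (M.Vt hK π ((h : ℕ) + 1)) s a := by
  have := M.expand h (M.Vt hK π ((h : ℕ) + 1))
    (fun i k => if k = M.kstar hK h (M.Vt hK π ((h : ℕ) + 1)) i then (1:ℝ) else 0) s a
  simp only [ite_mul, one_mul, zero_mul, Finset.sum_ite_eq', Finset.mem_univ, if_true] at this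
  simpa only [rstar, Pstar, Qt, ite_mul, one_mul, zero_mul, Finset.sum_ite_eq',
    Finset.mem_univ, if_true] using this

lemma cumW_star (M : DRMDP S A H K d) (hK : 1 ≤ K) (π : Fin H → S → A → ℝ) :
    ∀ t s, cumW H π (M.Pstar hK π) (M.rstar hK π) t s = M.Vt hK π t s := by
  suffices h : ∀ n t, H - t ≤ n → ∀ s,
      cumW H π (M.Pstar hK π) (M.rstar hK π) t s = M.Vt hK π t s from
    fun t s => h (H - t) t le_rfl s
  intro n
  induction n with
  | zero =>
    intro t ht s
    have h' : ¬ t < H := by omega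
    rw [cumW, Vt]
    simp [h']
  | succ n ih =>
    intro t ht s
    by_cases htH : t < H
    · rw [cumW, Vt]
      simp only [dif_pos htH]
      refine Finset.sum_congr rfl fun a _ => ?_
      congr 1
      have hcum : ∀ s', cumW H π (M.Pstar hK π) (M.rstar hK π) (t + 1) s' =
          M.Vt hK π (t + 1) s' := fun s' => ih (t + 1) (by omega) s'
      simp only [hcum]
      exact M.Qt_star hK π ⟨t, htH⟩ s a
    · rw [cumW, Vt]; simp [htH]

lemma Vt_le_cumW (M : DRMDP S A H K d) (hK : 1 ≤ K) (π : Fin H → S → A → ℝ)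
    (hπ : IsPolicy H π) (P : Fin H → S → A → S → ℝ) (r : Fin H → S → A → ℝ)
    (hU : ∀ h : Fin H, M.inU h (P h) (r h)) :
    ∀ t s, M.Vt hK π t s ≤ cumW H π P r t s := by
  suffices h : ∀ n t, H - t ≤ n → ∀ s, M.Vt hK π t s ≤ cumW H π P r t s from
    fun t s => h (H - t) t le_rfl s
  intro n
  induction n with
  | zero =>
    intro t ht s
    have h' : ¬ t < H := by omega
    rw [cumW, Vt]
    simp [h']
  | succ n ih =>
    intro t ht s
    by_cases htH : t < H
    · rw [cumW, Vt]
      simp only [dif_pos htH]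
      refine Finset.sum_le_sum fun a _ =>
        mul_le_mul_of_nonneg_left ?_ ((hπ ⟨t, htH⟩ s).1 a)
      obtain ⟨α, hαs, hr, hP⟩ := hU ⟨t, htH⟩
      rw [hr s a]
      simp only [hP]
      exact M.Qt_le hK ⟨t, htH⟩ hαs (fun s' => ih (t + 1) (by omega) s') s a
    · rw [cumW, Vt]; simp [htH]

lemma robustV_eq (M : DRMDP S A H K d) (hK : 1 ≤ K) (π : Fin H → S → A → ℝ)
    (hπ : IsPolicy H π) (t : ℕ) (s : S) : M.robustV π t s = M.Vt hK π t s := by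
  refine IsLeast.csInf_eq ⟨⟨M.Pstar hK π, M.rstar hK π, fun h => M.inU_star hK π h,
    (M.cumW_star hK π t s).symm⟩, ?_⟩
  rintro x ⟨P, r, hU, rfl⟩
  exact M.Vt_le_cumW hK π hπ P r hU t s

lemma robustQ_eq (M : DRMDP S A H K d) (hK : 1 ≤ K) (π : Fin H → S → A → ℝ)
    (hπ : IsPolicy H π) (h : Fin H) (s : S) (a : A) :
    M.robustQ π h s a = M.Qt hK h (M.Vt hK π ((h : ℕ) + 1)) s a := by
  refine IsLeast.csInf_eq ⟨⟨M.Pstar hK π, M.rstar hK π, fun t => M.inU_star hK π t, ?_⟩, ?_⟩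
  · simp only [M.cumW_star hK π]
    exact (M.Qt_star hK π h s a).symm
  · rintro x ⟨P, r, hU, rfl⟩
    obtain ⟨α, hαs, hr, hP⟩ := hU h
    rw [hr s a]
    simp only [hP]
    exact M.Qt_le hK h hαs
      (fun s' => M.Vt_le_cumW hK π hπ P r hU ((h : ℕ) + 1) s') s a

lemma bellman_eq (M : DRMDP S A H K d) (hK : 1 ≤ K) (π : Fin H → S → A → ℝ)
    (h : Fin H) (s : S) (a : A) :
    M.bellman h (M.Vt hK π ((h : ℕ) + 1)) s a = M.Qt hK h (M.Vt hK π ((h : ℕ) + 1)) s a := by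
  refine IsLeast.csInf_eq ⟨⟨M.Pstar hK π h, M.rstar hK π h, M.inU_star hK π h,
    (M.Qt_star hK π h s a).symm⟩, ?_⟩
  rintro x ⟨P, r, ⟨α, hαs, hr, hP⟩, rfl⟩
  rw [hr s a]
  simp only [hP]
  exact M.Qt_le hK h hαs (fun s' => le_refl _) s a

end DRMDP

/-- Robust Bellman equations: for any Markov policy `π`, step `h`, and `(s,a)`,
`Q_h^π(s,a) = inf_{(P_h,r_h)∈U_h} [ r_h(s,a) + ∑_{s'} P_h(s'|s,a) V_{h+1}^π(s') ]`
and `V_h^π(s) = ∑_a π_h(a|s) Q_h^π(s,a)`, with `V_{H+1}^π ≡ 0`. -/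
theorem stmt_4 {S A : Type} [Fintype S] [Fintype A] {H K d : ℕ} (hK : 1 ≤ K)
    (M : DRMDP S A H K d) (π : Fin H → S → A → ℝ) (hπ : IsPolicy H π) :
    (∀ s, M.robustV π H s = 0) ∧
    ∀ (h : Fin H) (s : S),
      (∀ a : A, M.robustQ π h s a =
        M.bellman h (fun s' => M.robustV π ((h : ℕ) + 1) s') s a) ∧
      M.robustV π (h : ℕ) s = ∑ a, π h s a * M.robustQ π h s a := by
  constructor
  · intro s
    rw [M.robustV_eq hK π hπ H s, DRMDP.Vt]
    simp
  · intro h s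
    constructor
    · intro a
      have hfun : (fun s' => M.robustV π ((h : ℕ) + 1) s') = M.Vt hK π ((h : ℕ) + 1) :=
        funext fun s' => M.robustV_eq hK π hπ _ s'
      rw [M.robustQ_eq hK π hπ h s a, hfun, M.bellman_eq hK π h s a]
    · rw [M.robustV_eq hK π hπ (h : ℕ) s, DRMDP.Vt]
      simp only [dif_pos h.isLt]
      refine Finset.sum_congr rfl fun a _ => ?_
      rw [M.robustQ_eq hK π hπ h s a]


end
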